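/- Let D be a λ⁺-excellent filter on I and let ⟨A_u : u ∈ [λ]^{<ω}⟩ be subsets of I. Then there exist ⟨B_u : u ∈ [λ]^{<ω}⟩ with B_u ⊆ A_u, B_u = A_u mod D, and such that whenever u₀, u₁ ∈ [λ]^{<ω} satisfy A_{u₀} ∩ A_{u₁} = A_{u₀∪u₁} mod D, then B_{u₀} ∩ B_{u₁} = B_{u₀∪u₁}. -/
import Mathlib


open scoped Classical

universe u v w

/-- Terms in the language of Boolean algebras, with variables from `V`. -/
inductive BTerm (V : Type v) : Type v where
  | var : V → BTerm V
  | bot : BTerm V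
  | top : BTerm V
  | inf : BTerm V → BTerm V → BTerm V
  | sup : BTerm V → BTerm V → BTerm V
  | compl : BTerm V → BTerm V

/-- Evaluation of a Boolean term in a Boolean algebra, given values for the variables. -/
def BTerm.eval {V : Type v} {B : Type u} [BooleanAlgebra B] (f : V → B) : BTerm V → B
  | .var v => f v
  | .bot => ⊥
  | .top => ⊤
  | .inf s t => s.eval f ⊓ t.eval f
  | .sup s t => s.eval f ⊔ t.eval f
  | .compl t => (t.eval f)ᶜ

/-- `σ ∈ Λ_{D, Ā↾u}`: the Boolean term `σ` vanishes modulo `D` on every sequence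
obtained from `Ā↾𝒫(u)` by replacing the entries indexed by sets not contained in
some `w ⊆ u` by `∅`. -/
def InLambda {ι : Type w} {I : Type u} (D : Filter I) (A : Finset ι → Set I)
    (u : Finset ι) (σ : BTerm {v : Finset ι // v ⊆ u}) : Prop :=
  ∀ w : Finset ι, w ⊆ u →
    (BTerm.eval (fun v => if v.1 ⊆ w then A v.1 else (∅ : Set I)) σ)ᶜ ∈ D

/-- `λ⁺`-excellence of a filter `D` on `I`. -/
def IsExcellent {I : Type u} (lam : Cardinal.{w}) (D : Filter I) : Prop :=
  ∀ A : Finset lam.out → Set I, ∃ B : Finset lam.out → Set I,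
    (∀ u, B u ⊆ A u) ∧
    (∀ u, {t | t ∈ A u ↔ t ∈ B u} ∈ D) ∧
    ∀ (u : Finset lam.out) (σ : BTerm {v : Finset lam.out // v ⊆ u}),
      InLambda D A u σ → BTerm.eval (fun v => B v.1) σ = ∅

/-- Let `D` be a `λ⁺`-excellent filter on `I` and `⟨A_u : u ∈ [λ]^{<ℵ₀}⟩` subsets of
`I`.  Then there are `⟨B_u⟩` with `B_u ⊆ A_u`, `B_u = A_u mod D`, such that whenever
`A_{u₀} ∩ A_{u₁} = A_{u₀ ∪ u₁} mod D` then `B_{u₀} ∩ B_{u₁} = B_{u₀ ∪ u₁}`. -/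
theorem excellent_multiplicative_refinement {I : Type u} (lam : Cardinal.{w})
    (D : Filter I) (h : IsExcellent lam D) (A : Finset lam.out → Set I) :
    ∃ B : Finset lam.out → Set I,
      (∀ u, B u ⊆ A u) ∧
      (∀ u, {t | t ∈ A u ↔ t ∈ B u} ∈ D) ∧
      ∀ u₀ u₁ : Finset lam.out,
        {t | t ∈ A u₀ ∩ A u₁ ↔ t ∈ A (u₀ ∪ u₁)} ∈ D →
        B u₀ ∩ B u₁ = B (u₀ ∪ u₁) := by
  obtain ⟨B, hsub, hmod, hterm⟩ := h A
  refine ⟨B, hsub, hmod, fun u₀ u₁ hm => ?_⟩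
  set u := u₀ ∪ u₁ with hu
  have h₀ : u₀ ⊆ u := Finset.subset_union_left
  have h₁ : u₁ ⊆ u := Finset.subset_union_right
  -- term 1 : var u₀ ⊓ var u₁ ⊓ (var u)ᶜ
  have t1 := hterm u (.inf (.inf (.var ⟨u₀, h₀⟩) (.var ⟨u₁, h₁⟩))
      (.compl (.var ⟨u, le_refl u⟩))) ?_
  have t2 := hterm u (.inf (.var ⟨u, le_refl u⟩)
      (.compl (.inf (.var ⟨u₀, h₀⟩) (.var ⟨u₁, h₁⟩)))) ?_
  · simp only [BTerm.eval] at t1 t2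
    ext t
    constructor
    · intro ht
      by_contra hc
      have : t ∈ ((B u₀ ⊓ B u₁) ⊓ (B u)ᶜ : Set I) := ⟨ht, hc⟩
      rw [t1] at this
      exact this
    · intro ht
      by_contra hc
      have : t ∈ (B u ⊓ (B u₀ ⊓ B u₁)ᶜ : Set I) := ⟨ht, hc⟩
      rw [t2] at this
      exact this
  · intro w hw
    simp only [BTerm.eval]
    by_cases hwu : u ⊆ w
    · rw [if_pos hwu]
      refine Filter.mem_of_superset hm (fun t ht => ?_)
      simp only [Set.mem_setOf_eq] at ht
      rw [if_pos (h₀.trans hwu), if_pos (h₁.trans hwu)]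
      intro hc
      exact hc.2 (ht.mpr hc.1)
    · rw [if_neg hwu]
      simp
  · intro w hw
    simp only [BTerm.eval]
    by_cases h0w : u₀ ⊆ w
    · by_cases h1w : u₁ ⊆ w
      · rw [if_pos h0w, if_pos h1w, if_pos (Finset.union_subset h0w h1w)]
        refine Filter.mem_of_superset hm (fun t ht => ?_)
        simp only [Set.mem_setOf_eq] at ht
        intro hc
        exact hc.2 (ht.mp hc.1)
      · rw [if_neg h1w]
        simp
    · rw [if_neg h0w]
      simp
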